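/- The algebraic Birkhoff decomposition is unique: if H is a connected graded Hopf algebra, A = A₊ ⊕ A₋ a vector space splitting of a commutative algebra with 1 ∈ A₊, and φ a character admitting two decompositions φ = (f⁻)^{⋆−1} ⋆ f⁺ = (g⁻)^{⋆−1} ⋆ g⁺ with f^±, g^± characters mapping the augmentation ideal into A_± respectively, then f⁺ = g⁺ and f⁻ = g⁻. -/

import Mathlib

open TensorProduct

/-- The convolution product `f ⋆ g = m_A ∘ (f ⊗ g) ∘ Δ_H`. -/
noncomputable def convProd {K H A : Type*} [CommSemiring K] [Semiring H] [HopfAlgebra K H]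
    [Semiring A] [Algebra K A] (f g : H →ₗ[K] A) : H →ₗ[K] A :=
  (LinearMap.mul' K A) ∘ₗ (TensorProduct.map f g) ∘ₗ Coalgebra.comul


section Aux

open Coalgebra HopfAlgebra LinearMap

variable {K : Type*} [CommSemiring K] {H : Type*} [Semiring H] [HopfAlgebra K H]
  {A : Type*} [CommSemiring A] [Algebra K A]

lemma convProd_assoc (a b c : H →ₗ[K] A) :
    convProd (convProd a b) c = convProd a (convProd b c) := by
  have e1 : TensorProduct.map (convProd a b) c
      = (mul' K A).rTensor A ∘ₗ TensorProduct.map (TensorProduct.map a b) c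
          ∘ₗ (Coalgebra.comul (R := K) (A := H)).rTensor H := by
    apply TensorProduct.ext'
    intro x y
    simp [convProd]
  have e2 : TensorProduct.map a (convProd b c)
      = (mul' K A).lTensor A ∘ₗ TensorProduct.map a (TensorProduct.map b c)
          ∘ₗ (Coalgebra.comul (R := K) (A := H)).lTensor H := by
    apply TensorProduct.ext'
    intro x y
    simp [convProd]
  have e4 : (mul' K A) ∘ₗ (mul' K A).lTensor A ∘ₗ TensorProduct.map a (TensorProduct.map b c)
        ∘ₗ (TensorProduct.assoc K H H H).toLinearMap
      = (mul' K A) ∘ₗ (mul' K A).rTensor A ∘ₗ TensorProduct.map (TensorProduct.map a b) c := by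
    apply TensorProduct.ext_threefold
    intro x y z
    simp [mul_assoc]
  rw [show convProd (convProd a b) c
        = (LinearMap.mul' K A) ∘ₗ TensorProduct.map (convProd a b) c ∘ₗ Coalgebra.comul from rfl,
      show convProd a (convProd b c)
        = (LinearMap.mul' K A) ∘ₗ TensorProduct.map a (convProd b c) ∘ₗ Coalgebra.comul from rfl,
      e1, e2]
  ext x
  have h := LinearMap.congr_fun e4 ((Coalgebra.comul (R := K) (A := H)).rTensor H
    (Coalgebra.comul (R := K) x))
  simp only [comp_apply, LinearEquiv.coe_coe] at h ⊢
  rw [← Coalgebra.coassoc_apply]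
  exact h.symm

lemma counit_convProd (p : H →ₗ[K] A) :
    convProd ((Algebra.linearMap K A) ∘ₗ Coalgebra.counit) p = p := by
  have e1 : TensorProduct.map ((Algebra.linearMap K A) ∘ₗ (Coalgebra.counit (R := K) (A := H))) p
      = TensorProduct.map (Algebra.linearMap K A) p
          ∘ₗ (Coalgebra.counit (R := K) (A := H)).rTensor H := by
    apply TensorProduct.ext'
    intro x y
    simp
  ext x
  simp only [convProd, comp_apply, e1]
  rw [Coalgebra.rTensor_counit_comul]
  simp

lemma convProd_antipode (f : H →ₐ[K] A) :
    convProd f.toLinearMap (f.toLinearMap ∘ₗ HopfAlgebra.antipode (R := K))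
      = (Algebra.linearMap K A) ∘ₗ Coalgebra.counit := by
  have e1 : TensorProduct.map f.toLinearMap (f.toLinearMap ∘ₗ HopfAlgebra.antipode (R := K))
      = TensorProduct.map f.toLinearMap f.toLinearMap
          ∘ₗ (HopfAlgebra.antipode (R := K) (A := H)).lTensor H := by
    apply TensorProduct.ext'
    intro x y
    simp
  have e2 : (mul' K A) ∘ₗ TensorProduct.map f.toLinearMap f.toLinearMap
      = f.toLinearMap ∘ₗ (mul' K H) := by
    apply TensorProduct.ext'
    intro x y
    simp
  ext x
  simp only [convProd, comp_apply, e1]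
  have h2 := LinearMap.congr_fun e2
    ((HopfAlgebra.antipode (R := K) (A := H)).lTensor H (Coalgebra.comul x))
  simp only [comp_apply] at h2
  rw [h2, HopfAlgebra.mul_antipode_lTensor_comul_apply]
  simp [AlgHom.commutes]

lemma convProd_cancel (f : H →ₐ[K] A) (p : H →ₗ[K] A) :
    convProd f.toLinearMap (convProd (f.toLinearMap ∘ₗ HopfAlgebra.antipode (R := K)) p) = p := by
  rw [← convProd_assoc, convProd_antipode, counit_convProd]

end Aux

section Aux2

variable {K : Type*} [CommSemiring K] {H : Type*} [Semiring H] [HopfAlgebra K H]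
  {A : Type*} [CommRing A] [Algebra K A]

lemma convProd_sub_left (a b c : H →ₗ[K] A) :
    convProd (a - b) c = convProd a c - convProd b c := by
  have h : TensorProduct.map (a - b) c = TensorProduct.map a c - TensorProduct.map b c := by
    apply TensorProduct.ext'
    intro x y
    simp [TensorProduct.sub_tmul]
  simp [convProd, h, LinearMap.comp_sub, LinearMap.sub_comp]

end Aux2

section Proj

variable {R M : Type*} [CommSemiring R] [AddCommMonoid M] [Module R M]

noncomputable def gradedProj (𝒜 : ℕ → Submodule R M) (h : DirectSum.IsInternal 𝒜) (n : ℕ) :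
    M →ₗ[R] M :=
  (𝒜 n).subtype ∘ₗ DirectSum.component R ℕ (fun i => ↥(𝒜 i)) n ∘ₗ
    (LinearEquiv.ofBijective (DirectSum.coeLinearMap 𝒜) h).symm.toLinearMap

lemma gradedProj_of_mem {𝒜 : ℕ → Submodule R M} {h : DirectSum.IsInternal 𝒜} {n : ℕ}
    {x : M} (hx : x ∈ 𝒜 n) : gradedProj 𝒜 h n x = x := by
  simp only [gradedProj, LinearMap.comp_apply, LinearEquiv.coe_coe, Submodule.coe_subtype]
  rw [← DirectSum.apply_eq_component, h.ofBijective_coeLinearMap_of_mem hx]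

lemma gradedProj_of_mem_ne {𝒜 : ℕ → Submodule R M} {h : DirectSum.IsInternal 𝒜} {m n : ℕ}
    (hmn : m ≠ n) {x : M} (hx : x ∈ 𝒜 m) : gradedProj 𝒜 h n x = 0 := by
  simp only [gradedProj, LinearMap.comp_apply, LinearEquiv.coe_coe, Submodule.coe_subtype]
  rw [← DirectSum.apply_eq_component, h.ofBijective_coeLinearMap_of_mem_ne hmn hx]
  rfl

end Proj

lemma counit_zero_of_pos_degree
    {K : Type*} [CommRing K] {H : Type*} [Semiring H] [HopfAlgebra K H]
    (𝒜 : ℕ → Submodule K H) (hinternal : DirectSum.IsInternal 𝒜)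
    (hconn : 𝒜 0 = Submodule.span K {(1 : H)})
    (hΔ : ∀ n : ℕ, ∀ x ∈ 𝒜 n, Coalgebra.comul (R := K) x ∈
      ⨆ (p : ℕ × ℕ) (_ : p.1 + p.2 = n),
        LinearMap.range (TensorProduct.map (𝒜 p.1).subtype (𝒜 p.2).subtype)) :
    ∀ n : ℕ, n ≠ 0 → ∀ x ∈ 𝒜 n, Coalgebra.counit (R := K) x = 0 := by
  intro n
  induction n using Nat.strong_induction_on with
  | _ n IH =>
  intro hn x hx
  set P0 : H →ₗ[K] H := gradedProj 𝒜 hinternal 0 with hP0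
  set G₁ : H ⊗[K] H →ₗ[K] H := (TensorProduct.lid K H).toLinearMap
      ∘ₗ LinearMap.rTensor H (Coalgebra.counit (R := K)) with hG₁
  set G₂ : H ⊗[K] H →ₗ[K] H := (TensorProduct.rid K H).toLinearMap
      ∘ₗ LinearMap.lTensor H (Coalgebra.counit (R := K)) with hG₂
  set E : H ⊗[K] H →ₗ[K] K := (Coalgebra.counit (R := K)) ∘ₗ G₁ with hE
  set N : H ⊗[K] H →ₗ[K] K := (Coalgebra.counit (R := K)) ∘ₗ P0 ∘ₗ G₁
      + (Coalgebra.counit (R := K)) ∘ₗ P0 ∘ₗ G₂ with hN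
  have hker : (⨆ (p : ℕ × ℕ) (_ : p.1 + p.2 = n),
      LinearMap.range (TensorProduct.map (𝒜 p.1).subtype (𝒜 p.2).subtype)) ≤
      LinearMap.ker (E - N) := by
    refine iSup_le fun p => iSup_le fun hp => LinearMap.range_le_ker_iff.mpr ?_
    apply TensorProduct.ext'
    rintro ⟨a, ha⟩ ⟨b, hb⟩
    simp only [LinearMap.comp_apply, TensorProduct.map_tmul, Submodule.coe_subtype,
      LinearMap.sub_apply, LinearMap.zero_apply, hE, hN, hG₁, hG₂, LinearMap.add_apply,
      LinearEquiv.coe_coe, LinearMap.lTensor_tmul, LinearMap.rTensor_tmul,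
      TensorProduct.rid_tmul, TensorProduct.lid_tmul, map_smul]
    by_cases hp1 : p.1 = 0
    · have hp2 : p.2 = n := by omega
      have ha0 : a ∈ Submodule.span K {(1 : H)} := by rw [← hconn]; exact hp1 ▸ ha
      obtain ⟨c, rfl⟩ := Submodule.mem_span_singleton.mp ha0
      have h1 : P0 b = 0 := gradedProj_of_mem_ne (by omega : p.2 ≠ 0) hb
      have h2 : P0 ((1 : H)) = (1 : H) :=
        gradedProj_of_mem (by rw [hconn]; exact Submodule.mem_span_singleton_self _)
      simp [h1, map_smul, h2, smul_eq_mul, mul_comm, sub_eq_zero]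
    · by_cases hp2 : p.2 = 0
      · have hb0 : b ∈ Submodule.span K {(1 : H)} := by rw [← hconn]; exact hp2 ▸ hb
        obtain ⟨c, rfl⟩ := Submodule.mem_span_singleton.mp hb0
        have h1 : P0 a = 0 := gradedProj_of_mem_ne hp1 ha
        have h2 : P0 ((1 : H)) = (1 : H) :=
          gradedProj_of_mem (by rw [hconn]; exact Submodule.mem_span_singleton_self _)
        simp [h1, map_smul, h2, smul_eq_mul, mul_comm, sub_eq_zero]
      · have hlt : p.1 < n := by omega
        have hεa : Coalgebra.counit (R := K) a = 0 := IH p.1 hlt hp1 a ha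
        have h1 : P0 a = 0 := gradedProj_of_mem_ne hp1 ha
        simp [hεa, h1, map_smul]
  have h := hker (hΔ n x hx)
  rw [LinearMap.mem_ker, LinearMap.sub_apply, sub_eq_zero] at h
  have hG₁x : G₁ (Coalgebra.comul (R := K) x) = x := by
    rw [hG₁]
    simp only [LinearMap.comp_apply, LinearEquiv.coe_coe]
    rw [Coalgebra.rTensor_counit_comul]
    simp
  have hG₂x : G₂ (Coalgebra.comul (R := K) x) = x := by
    rw [hG₂]
    simp only [LinearMap.comp_apply, LinearEquiv.coe_coe]
    rw [Coalgebra.lTensor_counit_comul]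
    simp
  have hP0x : P0 x = 0 := gradedProj_of_mem_ne hn hx
  rw [hE, hN] at h
  simp only [LinearMap.comp_apply, LinearMap.add_apply, hG₁x, hG₂x, hP0x, map_zero,
    add_zero] at h
  exact h


/-- Uniqueness of the algebraic Birkhoff decomposition: if `H` is a connected
graded Hopf algebra, `A = A₊ ⊕ A₋` a vector-space splitting of a commutative algebra with
`1 ∈ A₊`, and `φ` a character admitting two decompositions
`φ = (f⁻)^{⋆-1} ⋆ f⁺ = (g⁻)^{⋆-1} ⋆ g⁺` (with `(h)^{⋆-1} = h ∘ S`) where `f^±, g^±` are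
characters mapping the augmentation ideal into `A₊` resp. `A₋`, then `f⁺ = g⁺` and
`f⁻ = g⁻`. -/
theorem birkhoff_decomposition_unique
    (K : Type*) [Field K]
    (H : Type*) [Semiring H] [HopfAlgebra K H]
    (𝒜 : ℕ → Submodule K H) (hinternal : DirectSum.IsInternal 𝒜)
    (hconn : 𝒜 0 = Submodule.span K {(1 : H)})
    (hΔ : ∀ n : ℕ, ∀ x ∈ 𝒜 n, Coalgebra.comul (R := K) x ∈
      ⨆ (p : ℕ × ℕ) (_ : p.1 + p.2 = n),
        LinearMap.range (TensorProduct.map (𝒜 p.1).subtype (𝒜 p.2).subtype))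
    (A : Type*) [CommRing A] [Algebra K A]
    (Ap Am : Submodule K A) (hcompl : IsCompl Ap Am) (h1A : (1 : A) ∈ Ap)
    (φ fp fm gp gm : H →ₐ[K] A)
    (hfp : ∀ x : H, Coalgebra.counit (R := K) x = 0 → fp x ∈ Ap)
    (hfm : ∀ x : H, Coalgebra.counit (R := K) x = 0 → fm x ∈ Am)
    (hgp : ∀ x : H, Coalgebra.counit (R := K) x = 0 → gp x ∈ Ap)
    (hgm : ∀ x : H, Coalgebra.counit (R := K) x = 0 → gm x ∈ Am)
    (hf : convProd ((fm : H →ₗ[K] A) ∘ₗ HopfAlgebra.antipode (R := K)) (fp : H →ₗ[K] A)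
            = (φ : H →ₗ[K] A))
    (hg : convProd ((gm : H →ₗ[K] A) ∘ₗ HopfAlgebra.antipode (R := K)) (gp : H →ₗ[K] A)
            = (φ : H →ₗ[K] A)) :
    fp = gp ∧ fm = gm := by
  classical
  have hε := counit_zero_of_pos_degree 𝒜 hinternal hconn hΔ
  have hfp' : convProd (fm : H →ₗ[K] A) (φ : H →ₗ[K] A) = (fp : H →ₗ[K] A) := by
    rw [← hf]; exact convProd_cancel fm (fp : H →ₗ[K] A)
  have hgp' : convProd (gm : H →ₗ[K] A) (φ : H →ₗ[K] A) = (gp : H →ₗ[K] A) := by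
    rw [← hg]; exact convProd_cancel gm (gp : H →ₗ[K] A)
  set D : H →ₗ[K] A := (fm : H →ₗ[K] A) - (gm : H →ₗ[K] A) with hD
  have hDapp : ∀ x : H, D x = fm x - gm x := fun x => rfl
  have hconv : convProd D (φ : H →ₗ[K] A) = (fp : H →ₗ[K] A) - (gp : H →ₗ[K] A) := by
    rw [hD, convProd_sub_left, hfp', hgp']
  have key : ∀ n : ℕ, ∀ x ∈ 𝒜 n, D x = 0 := by
    intro n
    induction n using Nat.strong_induction_on with
    | _ n IH =>
    intro x hx
    rcases eq_or_ne n 0 with rfl | hn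
    · obtain ⟨c, rfl⟩ := Submodule.mem_span_singleton.mp (by rw [← hconn]; exact hx)
      rw [hDapp]
      simp
    · set L₁ : H ⊗[K] H →ₗ[K] A := LinearMap.mul' K A ∘ₗ TensorProduct.map D (φ : H →ₗ[K] A)
        with hL₁
      set L₂ : H ⊗[K] H →ₗ[K] A := D ∘ₗ gradedProj 𝒜 hinternal n
          ∘ₗ (TensorProduct.rid K H).toLinearMap
          ∘ₗ LinearMap.lTensor H (Coalgebra.counit (R := K)) with hL₂
      have hker : (⨆ (p : ℕ × ℕ) (_ : p.1 + p.2 = n),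
          LinearMap.range (TensorProduct.map (𝒜 p.1).subtype (𝒜 p.2).subtype)) ≤
          LinearMap.ker (L₁ - L₂) := by
        refine iSup_le fun p => iSup_le fun hp => LinearMap.range_le_ker_iff.mpr ?_
        apply TensorProduct.ext'
        rintro ⟨a, ha⟩ ⟨b, hb⟩
        simp only [LinearMap.comp_apply, TensorProduct.map_tmul, Submodule.coe_subtype,
          LinearMap.sub_apply, LinearMap.zero_apply, hL₁, hL₂, LinearEquiv.coe_coe,
          LinearMap.lTensor_tmul, TensorProduct.rid_tmul, map_smul]
        by_cases hpn : p.1 = n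
        · have hq : p.2 = 0 := by omega
          have hb0 : b ∈ Submodule.span K {(1 : H)} := by rw [← hconn]; exact hq ▸ hb
          obtain ⟨c, rfl⟩ := Submodule.mem_span_singleton.mp hb0
          rw [gradedProj_of_mem (hpn ▸ ha)]
          simp [Algebra.mul_smul_comm, sub_eq_zero, Bialgebra.counit_one]
        · have h1 : D a = 0 := IH p.1 (by omega) a ha
          have h2 : gradedProj 𝒜 hinternal n a = 0 := gradedProj_of_mem_ne hpn ha
          simp [h1, h2]
      have hL : L₁ (Coalgebra.comul (R := K) x) = L₂ (Coalgebra.comul (R := K) x) := by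
        have h := hker (hΔ n x hx)
        rw [LinearMap.mem_ker, LinearMap.sub_apply, sub_eq_zero] at h
        exact h
      have hL2 : L₂ (Coalgebra.comul (R := K) x) = D x := by
        rw [hL₂]
        simp only [LinearMap.comp_apply, LinearEquiv.coe_coe]
        rw [Coalgebra.lTensor_counit_comul]
        simp [gradedProj_of_mem hx]
      have hL1 : L₁ (Coalgebra.comul (R := K) x) = fp x - gp x := by
        have h := LinearMap.congr_fun hconv x
        simpa [convProd, hL₁, LinearMap.comp_apply] using h
      have hxAp : D x ∈ Ap := by
        rw [show D x = fp x - gp x from by rw [← hL2, ← hL, hL1]]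
        exact Submodule.sub_mem _ (hfp x (hε n hn x hx)) (hgp x (hε n hn x hx))
      have hxAm : D x ∈ Am := by
        rw [hDapp]
        exact Submodule.sub_mem _ (hfm x (hε n hn x hx)) (hgm x (hε n hn x hx))
      have hmem := Submodule.mem_inf.mpr ⟨hxAp, hxAm⟩
      rw [hcompl.inf_eq_bot] at hmem
      simpa using hmem
  have hDzero : ∀ x : H, D x = 0 := by
    intro x
    have hxmem : x ∈ ⨆ n, 𝒜 n := by rw [hinternal.submodule_iSup_eq_top]; trivial
    refine Submodule.iSup_induction 𝒜 (motive := fun y => D y = 0) hxmem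
      (fun n y hy => key n y hy) (map_zero D) ?_
    intro y z hy hz
    rw [map_add, hy, hz, add_zero]
  have hfm_eq : (fm : H →ₗ[K] A) = (gm : H →ₗ[K] A) := by
    ext y
    have h := hDzero y
    rw [hDapp, sub_eq_zero] at h
    exact h
  constructor
  · ext y
    have h : (fp : H →ₗ[K] A) = (gp : H →ₗ[K] A) := by rw [← hfp', ← hgp', hfm_eq]
    exact LinearMap.congr_fun h y
  · ext y
    exact LinearMap.congr_fun hfm_eq y
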